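/- Let A be a clone over ℕ. If a ∈ A is finitary and f : ℕ → A is such that f i is finitary for every i, then a[f] is finitary. Consequently the set F(A) of finitary elements of A, with the restricted substitution operation and the same distinguished elements x_i (each x_i is finitary, having rank i), is itself a clone over ℕ, and F(A) is locally finitary. -/

import Mathlib

/-- A clone over the positive integers ℕ = {1,2,3,…}. -/
structure CloneN (A : Type*) where
  sub : A → (ℕ+ → A) → A
  x : ℕ+ → A
  sub_assoc : ∀ (a : A) (f g : ℕ+ → A), sub (sub a f) g = sub a (fun i => sub (f i) g)
  sub_x : ∀ a : A, sub a x = a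
  x_sub : ∀ (i : ℕ+) (f : ℕ+ → A), sub (x i) f = f i

/-- `a` has rank `n`: for `n ≥ 1` this means `a[⟪x_1,…,x_n⟫] = a` where
`⟪x_1,…,x_n⟫ = (x_1,…,x_{n-1},x_n,x_n,…)`; rank `0` means
`a[⟪x_1⟫] = a[⟪x_2⟫] = a`. -/
def CloneN.HasRank {A : Type*} (C : CloneN A) : ℕ → A → Prop
  | 0, a => C.sub a (fun _ => C.x 1) = a ∧ C.sub a (fun _ => C.x 2) = a
  | n + 1, a => C.sub a (fun i => C.x (min i ⟨n + 1, Nat.succ_pos n⟩)) = a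

/-- An element is finitary if it has some finite rank `n ≥ 0`. -/
def CloneN.Finitary {A : Type*} (C : CloneN A) (a : A) : Prop := ∃ n : ℕ, C.HasRank n a

/-- A clone is locally finitary if every element is finitary. -/
def CloneN.LocallyFinitary {A : Type*} (C : CloneN A) : Prop := ∀ a : A, C.Finitary a

namespace CloneN
variable {A : Type*} (C : CloneN A)

lemma hasRank_succ {a : A} : ∀ {n : ℕ}, C.HasRank n a → C.HasRank (n+1) a := by
  intro n h
  match n, h with
  | 0, ⟨h1, h2⟩ =>
    show C.sub a (fun i => C.x (min i ⟨1, Nat.succ_pos 0⟩)) = a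
    have he : (fun i : ℕ+ => C.x (min i ⟨1, Nat.succ_pos 0⟩)) = fun _ => C.x 1 := by
      funext i
      congr 1
      exact min_eq_right i.one_le
    rw [he]; exact h1
  | n+1, h =>
    show C.sub a (fun i => C.x (min i ⟨n+2, Nat.succ_pos (n+1)⟩)) = a
    conv_lhs => rw [← h]
    rw [C.sub_assoc]
    have he : (fun i : ℕ+ => C.sub (C.x (min i ⟨n+1, Nat.succ_pos n⟩))
        (fun j => C.x (min j ⟨n+2, Nat.succ_pos (n+1)⟩)))
        = fun i : ℕ+ => C.x (min i ⟨n+1, Nat.succ_pos n⟩) := by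
      funext i
      rw [C.x_sub]
      congr 1
      exact min_eq_left (le_trans (min_le_right _ _) (by exact_mod_cast Nat.le_succ (n+1)))
    rw [he]; exact h

lemma hasRank_of_le {a : A} {m N : ℕ} (h : C.HasRank m a) (hmN : m ≤ N) (hN : 1 ≤ N) :
    C.HasRank N a := by
  induction N with
  | zero => omega
  | succ N ih =>
    rcases Nat.lt_or_ge m (N+1) with hlt | hge
    · rcases Nat.eq_zero_or_pos N with rfl | hN0
      · have : m = 0 := by omega
        subst this
        exact C.hasRank_succ h
      · exact C.hasRank_succ (ih (by omega) (by omega))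
    · have : m = N+1 := le_antisymm hmN hge
      subst this; exact h

lemma finitary_sub {a : A} {f : ℕ+ → A} (ha : C.Finitary a) (hf : ∀ i, C.Finitary (f i)) :
    C.Finitary (C.sub a f) := by
  obtain ⟨n, hn⟩ := ha
  obtain ⟨m, hm⟩ : ∃ m, C.HasRank (m+1) a := ⟨n, C.hasRank_succ hn⟩
  choose r hr using hf
  set N := (Finset.Icc 1 (⟨m+1, Nat.succ_pos m⟩ : ℕ+)).sup r with hNdef
  have hfN : ∀ j : ℕ+, j ≤ ⟨m+1, Nat.succ_pos m⟩ → C.HasRank (N+1) (f j) := by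
    intro j hj
    refine C.hasRank_of_le (hr j) ?_ (Nat.succ_pos N)
    exact Nat.le_succ_of_le (Finset.le_sup (f := r) (by exact (Finset.mem_Icc (α := {n : ℕ // 0 < n})).mpr ⟨j.one_le, hj⟩))
  refine ⟨N+1, ?_⟩
  show C.sub (C.sub a f) (fun i => C.x (min i ⟨N+1, Nat.succ_pos N⟩)) = C.sub a f
  have key : C.sub a f = C.sub a (fun i => f (min i ⟨m+1, Nat.succ_pos m⟩)) := by
    conv_lhs => rw [← hm]
    rw [C.sub_assoc]
    simp only [C.x_sub]
  rw [key, C.sub_assoc]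
  congr 1
  funext i
  exact hfN (min i ⟨m+1, Nat.succ_pos m⟩) (min_le_right _ _)

lemma hasRank_x : ∀ i : ℕ+, C.HasRank i (C.x i) := by
  rintro ⟨k, hk⟩
  match k, hk with
  | n+1, hk =>
    show C.sub (C.x (⟨n+1, hk⟩ : ℕ+)) (fun i => C.x (min i ⟨n+1, Nat.succ_pos n⟩)) = C.x (⟨n+1, hk⟩ : ℕ+)
    erw [C.x_sub]
    congr 1
    exact min_self _

end CloneN

/-- If `a` is finitary and all `f i` are finitary then `a[f]` is finitary; each `x_i`
is finitary of rank `i`; consequently the set `F(A)` of finitary elements, with the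
restricted substitution and the same distinguished elements, is a clone over ℕ and is
locally finitary. -/
theorem finitary_elements_form_locally_finitary_clone {A : Type*} (C : CloneN A) :
    (∀ (a : A) (f : ℕ+ → A),
      C.Finitary a → (∀ i, C.Finitary (f i)) → C.Finitary (C.sub a f)) ∧
    (∀ i : ℕ+, C.HasRank i (C.x i)) ∧
    (∃ C' : CloneN {a : A // C.Finitary a},
      (∀ i : ℕ+, (C'.x i : A) = C.x i) ∧
      (∀ (a : {a : A // C.Finitary a}) (f : ℕ+ → {a : A // C.Finitary a}),
        ((C'.sub a f : A)) = C.sub (a : A) (fun i => (f i : A))) ∧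
      C'.LocallyFinitary) := by
  refine ⟨fun a f ha hf => C.finitary_sub ha hf, C.hasRank_x, ?_⟩
  refine ⟨{ sub := fun a f => ⟨C.sub a.1 (fun i => (f i).1), C.finitary_sub a.2 (fun i => (f i).2)⟩,
            x := fun i => ⟨C.x i, i, C.hasRank_x i⟩,
            sub_assoc := fun a f g => Subtype.ext (C.sub_assoc a.1 _ _),
            sub_x := fun a => Subtype.ext (C.sub_x a.1),
            x_sub := fun i f => Subtype.ext (C.x_sub i _) },
          fun i => rfl, fun a f => rfl, ?_⟩
  rintro ⟨a, n, hn⟩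
  refine ⟨n, ?_⟩
  match n, hn with
  | 0, ⟨h1, h2⟩ => exact ⟨Subtype.ext h1, Subtype.ext h2⟩
  | n+1, hn => exact Subtype.ext hn
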